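/- Let F be a field with a single variable polynomial ring F[T] and let f ∈ F[T]. For all n ≥ 1 and j ≥ 1, the Leibniz rule gives D_j(f^n) = Σ_{i=1}^{j} C(n,i) f^{n-i} Σ_{k_1+...+k_i = j, all k_m ≥ 1} D_{k_1}(f) ⋯ D_{k_i}(f), where C(n,i) is the binomial coefficient in F. -/

import Mathlib

open scoped Classical

open Polynomial Finset

/-- Cons decomposition of sums over `antidiagonalTuple`. -/
lemma sum_antidiagonalTuple_succ' {M : Type*} [AddCommMonoid M] {i j : ℕ}
    (g : (Fin (i + 1) → ℕ) → M) :
    ∑ t ∈ Finset.Nat.antidiagonalTuple (i + 1) j, g t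
      = ∑ p ∈ Finset.HasAntidiagonal.antidiagonal j, ∑ s ∈ Finset.Nat.antidiagonalTuple i p.2,
          g (Fin.cons p.1 s) := by
  rw [Finset.sum_sigma']
  refine Finset.sum_nbij' (fun t => ⟨(t 0, j - t 0), Fin.tail t⟩)
    (fun p => Fin.cons p.1.1 p.2) ?_ ?_ ?_ ?_ ?_
  · intro t ht
    rw [Finset.Nat.mem_antidiagonalTuple] at ht
    rw [Fin.sum_univ_succ] at ht
    simp only [Finset.mem_sigma, Finset.HasAntidiagonal.mem_antidiagonal,
      Finset.Nat.mem_antidiagonalTuple]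
    constructor
    · omega
    · simp only [Fin.tail]
      omega
  · rintro ⟨⟨a, b⟩, s⟩ hp
    simp only [Finset.mem_sigma, Finset.HasAntidiagonal.mem_antidiagonal,
      Finset.Nat.mem_antidiagonalTuple] at hp
    rw [Finset.Nat.mem_antidiagonalTuple, Fin.sum_univ_succ]
    simp only [Fin.cons_zero, Fin.cons_succ]
    omega
  · intro t ht
    simp only [Fin.cons_self_tail]
  · rintro ⟨⟨a, b⟩, s⟩ hp
    simp only [Finset.mem_sigma, Finset.HasAntidiagonal.mem_antidiagonal,
      Finset.Nat.mem_antidiagonalTuple] at hp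
    obtain ⟨h1, h2⟩ := hp
    simp only [Fin.cons_zero, Fin.tail_cons]
    have hb : j - a = b := by omega
    subst hb
    rfl
  · intro t ht
    simp only [Fin.cons_self_tail]

/-- Coefficient of a power of a polynomial as a sum over antidiagonal tuples. -/
lemma coeff_pow_tuple {R : Type*} [CommSemiring R] (p : Polynomial R) (i j : ℕ) :
    (p ^ i).coeff j = ∑ t ∈ Finset.Nat.antidiagonalTuple i j, ∏ m, p.coeff (t m) := by
  induction i generalizing j with
  | zero =>
    cases j with
    | zero => simp [Finset.Nat.antidiagonalTuple_zero_zero]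
    | succ j => simp [Finset.Nat.antidiagonalTuple_zero_succ, coeff_one]
  | succ i ih =>
    rw [pow_succ', coeff_mul, sum_antidiagonalTuple_succ']
    refine Finset.sum_congr rfl fun ab hab => ?_
    rw [ih, Finset.mul_sum]
    refine Finset.sum_congr rfl fun s hs => ?_
    rw [Fin.prod_univ_succ]
    simp [Fin.cons_zero, Fin.cons_succ]

noncomputable def hsPhi (F : Type*) [CommRing F] :
    Polynomial F →ₐ[F] Polynomial (Polynomial F) :=
  Polynomial.aeval (Polynomial.C Polynomial.X + Polynomial.X)

lemma coeff_hsPhi {F : Type*} [CommRing F] (f : Polynomial F) (j : ℕ) :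
    (hsPhi F f).coeff j = Polynomial.hasseDeriv j f := by
  induction f using Polynomial.induction_on' with
  | add p q hp hq => simp [map_add, hp, hq]
  | monomial m a =>
    rw [hsPhi, aeval_monomial, add_pow, hasseDeriv_monomial]
    have halg : (algebraMap F (Polynomial (Polynomial F))) a
        = Polynomial.C (Polynomial.C a) := rfl
    rw [halg, Finset.mul_sum, finset_sum_coeff]
    have hterm : ∀ k ∈ Finset.range (m + 1),
        (Polynomial.C (Polynomial.C a) *
          ((Polynomial.C (Polynomial.X : Polynomial F)) ^ k * Polynomial.X ^ (m - k) *
            (m.choose k : Polynomial (Polynomial F)))).coeff j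
        = if j = m - k then Polynomial.C a * Polynomial.X ^ k * (m.choose k : Polynomial F)
            else 0 := by
      intro k hk
      rw [show (m.choose k : Polynomial (Polynomial F))
            = Polynomial.C ((m.choose k : Polynomial F)) from
          (Polynomial.C_eq_natCast _).symm]
      rw [show Polynomial.C (Polynomial.C a) *
            ((Polynomial.C (Polynomial.X : Polynomial F)) ^ k * Polynomial.X ^ (m - k) *
              Polynomial.C ((m.choose k : Polynomial F)))
          = Polynomial.C (Polynomial.C a * Polynomial.X ^ k * (m.choose k : Polynomial F)) *
              Polynomial.X ^ (m - k) by simp only [map_mul, map_pow]; ring]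
      rw [Polynomial.coeff_C_mul, Polynomial.coeff_X_pow]
      split <;> simp
    rw [Finset.sum_congr rfl hterm]
    rw [Finset.sum_eq_single (m - j)]
    · by_cases hjm : j ≤ m
      · rw [if_pos (by omega)]
        rw [Nat.choose_symm hjm]
        rw [← Polynomial.C_mul_X_pow_eq_monomial]
        simp only [map_mul, Polynomial.C_eq_natCast]
        ring
      · rw [if_neg (by omega), Nat.choose_eq_zero_of_lt (by omega)]
        simp
    · intro k hk hkne
      rw [Finset.mem_range] at hk
      rw [if_neg (by omega)]
    · intro h
      rw [Finset.mem_range, not_lt] at h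
      rw [if_neg (by omega)]

/-- the multi-factor Leibniz rule for powers:
D_j(f^n) = Σ_{i=1}^{j} C(n,i) f^(n-i) Σ_{k_1+...+k_i = j, k_m ≥ 1} D_{k_1}(f)⋯D_{k_i}(f). -/
theorem stmt_18 (F : Type*) [Field F] (f : Polynomial F) (n j : ℕ)
    (hn : 1 ≤ n) (hj : 1 ≤ j) :
    Polynomial.hasseDeriv j (f ^ n) =
      ∑ i ∈ Finset.Icc 1 j,
        (Nat.choose n i : Polynomial F) * f ^ (n - i) *
          ∑ k ∈ (Finset.Nat.antidiagonalTuple i j).filter (fun k => ∀ m, 0 < k m),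
            ∏ m : Fin i, Polynomial.hasseDeriv (k m) f := by
  classical
  set g : Polynomial (Polynomial F) := hsPhi F f - Polynomial.C f with hgdef
  have hgc : ∀ k, g.coeff k = if k = 0 then 0 else Polynomial.hasseDeriv k f := by
    intro k
    rw [hgdef, Polynomial.coeff_sub, coeff_hsPhi, Polynomial.coeff_C]
    cases k with
    | zero => simp [Polynomial.hasseDeriv_zero']
    | succ k => simp
  have key : hsPhi F f = g + Polynomial.C f := by rw [hgdef]; ring
  have hgpow : ∀ i, (g ^ i).coeff j =
      ∑ k ∈ (Finset.Nat.antidiagonalTuple i j).filter (fun k => ∀ m, 0 < k m),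
        ∏ m : Fin i, Polynomial.hasseDeriv (k m) f := by
    intro i
    rw [coeff_pow_tuple, Finset.sum_filter]
    refine Finset.sum_congr rfl fun t ht => ?_
    by_cases hpos : ∀ m, 0 < t m
    · rw [if_pos hpos]
      refine Finset.prod_congr rfl fun m _ => ?_
      rw [hgc, if_neg (by have := hpos m; omega)]
    · rw [if_neg hpos]
      push_neg at hpos
      obtain ⟨m, hm⟩ := hpos
      refine Finset.prod_eq_zero (Finset.mem_univ m) ?_
      rw [hgc, if_pos (by omega)]
  have main : Polynomial.hasseDeriv j (f ^ n)
      = ∑ i ∈ Finset.range (n + 1),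
          (Nat.choose n i : Polynomial F) * f ^ (n - i) *
            ∑ k ∈ (Finset.Nat.antidiagonalTuple i j).filter (fun k => ∀ m, 0 < k m),
              ∏ m : Fin i, Polynomial.hasseDeriv (k m) f := by
    rw [← coeff_hsPhi, map_pow, key, add_pow, finset_sum_coeff]
    refine Finset.sum_congr rfl fun i hi => ?_
    rw [show g ^ i * Polynomial.C f ^ (n - i) * (n.choose i : Polynomial (Polynomial F))
        = g ^ i * Polynomial.C (f ^ (n - i) * (n.choose i : Polynomial F)) by
      simp only [map_mul, map_pow, Polynomial.C_eq_natCast]; ring]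
    rw [Polynomial.coeff_mul_C, hgpow]
    ring
  rw [main]
  have hSvan : ∀ i : ℕ, i = 0 ∨ j < i →
      (∑ k ∈ (Finset.Nat.antidiagonalTuple i j).filter (fun k => ∀ m, 0 < k m),
        ∏ m : Fin i, Polynomial.hasseDeriv (k m) f) = 0 := by
    intro i hi
    rcases hi with h0 | hji
    · subst h0
      have hempty : Finset.Nat.antidiagonalTuple 0 j = ∅ := by
        cases j with
        | zero => omega
        | succ j => exact Finset.Nat.antidiagonalTuple_zero_succ j
      simp [hempty]
    · refine Finset.sum_eq_zero fun t ht => ?_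
      exfalso
      rw [Finset.mem_filter, Finset.Nat.mem_antidiagonalTuple] at ht
      have : (Finset.univ : Finset (Fin i)).card • 1 ≤ ∑ m, t m :=
        Finset.card_nsmul_le_sum _ _ _ fun m _ => ht.2 m
      simp only [Finset.card_univ, Fintype.card_fin, smul_eq_mul, mul_one] at this
      omega
  have hsub1 : Finset.range (n + 1) ⊆ Finset.range (n + 1) ∪ Finset.Icc 1 j :=
    Finset.subset_union_left
  have hsub2 : Finset.Icc 1 j ⊆ Finset.range (n + 1) ∪ Finset.Icc 1 j :=
    Finset.subset_union_right
  rw [Finset.sum_subset hsub1, Finset.sum_subset hsub2]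
  · intro i hi hni
    rw [Finset.mem_Icc] at hni
    have : i = 0 ∨ j < i := by omega
    rw [hSvan i this]
    ring
  · intro i hi hni
    rw [Finset.mem_range, not_lt] at hni
    rw [Nat.choose_eq_zero_of_lt (by omega)]
    push_cast
    ring
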